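/- Let f : [0,∞) → (0,∞) be continuous with ∫₀^∞ f(s) ds < ∞. Then there exists a positive solution u ∈ C²([0,∞)) of −u'' = f(u) on (0,∞) with u(0) = 0. Moreover one may take u = h⁻¹, where h(t) = ∫₀^t dz/g(z) and g(z) = ( 2 ∫_z^∞ f(s) ds )^{1/2}, noting that h is an increasing bijection from [0,∞) to [0,∞). -/

import Mathlib

open Set MeasureTheory

/-- `g(z) = (2 ∫_z^∞ f(s) ds)^{1/2}`. -/
noncomputable def gfun (f : ℝ → ℝ) (z : ℝ) : ℝ :=
  Real.sqrt (2 * ∫ s in Ioi z, f s)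

/-- `h(t) = ∫_0^t dz / g(z)`. -/
noncomputable def hfun (f : ℝ → ℝ) (t : ℝ) : ℝ :=
  ∫ z in (0 : ℝ)..t, (gfun f z)⁻¹

section Aux

noncomputable def Ffun (f : ℝ → ℝ) (z : ℝ) : ℝ := ∫ s in Ioi z, f s

variable {f : ℝ → ℝ}
variable (hfcont : ContinuousOn f (Ici 0))
    (hfpos : ∀ s ∈ Ici (0 : ℝ), 0 < f s)
    (hfint : IntegrableOn f (Ioi 0))

theorem gfun_eq : gfun f = fun z => Real.sqrt (2 * Ffun f z) := rfl

include hfint in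
theorem Fint {z : ℝ} (hz : 0 ≤ z) : IntegrableOn f (Ioi z) :=
  hfint.mono_set (Ioi_subset_Ioi hz)

include hfpos hfint in
theorem Fpos {z : ℝ} (hz : 0 ≤ z) : 0 < Ffun f z := by
  rw [Ffun, setIntegral_pos_iff_support_of_nonneg_ae]
  · have : Ioi z ⊆ Function.support f ∩ Ioi z := by
      intro x hx
      exact ⟨(hfpos x (le_of_lt (lt_of_le_of_lt hz hx))).ne', hx⟩
    calc (0:ENNReal) < volume (Ioi z) := by simp
      _ ≤ volume (Function.support f ∩ Ioi z) := measure_mono this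
  · filter_upwards [ae_restrict_mem measurableSet_Ioi] with x hx
    exact (hfpos x (le_of_lt (lt_of_le_of_lt hz hx))).le
  · exact Fint hfint hz

include hfint in
theorem Fsplit {a b : ℝ} (ha : 0 ≤ a) (hab : a ≤ b) :
    Ffun f a = (∫ s in a..b, f s) + Ffun f b := by
  rw [Ffun, Ffun, ← Ioc_union_Ioi_eq_Ioi hab,
    setIntegral_union (Ioc_disjoint_Ioi le_rfl) measurableSet_Ioi
      ((Fint hfint ha).mono_set Ioc_subset_Ioi_self) (Fint hfint (ha.trans hab)),
    intervalIntegral.integral_of_le hab]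

include hfint in
theorem Fival {z : ℝ} (hz : 0 ≤ z) : IntervalIntegrable f volume 0 z := by
  rw [intervalIntegrable_iff_integrableOn_Ioc_of_le hz]
  exact hfint.mono_set Ioc_subset_Ioi_self

include hfcont hfint in
theorem FhasDerivAt {z : ℝ} (hz : 0 < z) : HasDerivAt (Ffun f) (-(f z)) z := by
  have h1 : HasDerivAt (fun y => Ffun f 0 - ∫ s in (0:ℝ)..y, f s) (-(f z)) z := by
    have := (intervalIntegral.integral_hasDerivAt_right (Fival hfint hz.le)
      (ContinuousOn.stronglyMeasurableAtFilter isOpen_Ioi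
        (hfcont.mono (Ioi_subset_Ici le_rfl)) z hz)
      (hfcont.continuousAt (Ici_mem_nhds hz)))
    have h2 := (hasDerivAt_const z (Ffun f 0)).sub this
    rw [zero_sub] at h2
    exact h2
  refine h1.congr_of_eventuallyEq ?_
  filter_upwards [Ioi_mem_nhds hz] with y hy
  rw [Fsplit hfint le_rfl (le_of_lt hy)]; ring

include hfcont hfint in
theorem FhasDerivWithinAt {z : ℝ} (hz : 0 ≤ z) :
    HasDerivWithinAt (Ffun f) (-(f z)) (Ici 0) z := by
  rcases eq_or_lt_of_le hz with rfl | hz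
  · have h1 : HasDerivWithinAt (fun y => Ffun f 0 - ∫ s in (0:ℝ)..y, f s)
        (-(f 0)) (Ici 0) 0 := by
      have := intervalIntegral.integral_hasDerivWithinAt_right
        (intervalIntegrable_iff_integrableOn_Ioc_of_le le_rfl |>.mpr (by simp))
        (s := Ici 0) (t := Ioi 0)
        ⟨Ici 0, Filter.mem_of_superset self_mem_nhdsWithin Ioi_subset_Ici_self,
          hfcont.aestronglyMeasurable measurableSet_Ici⟩
        ((hfcont 0 (mem_Ici.mpr le_rfl)).mono Ioi_subset_Ici_self)
      have h2 := (hasDerivWithinAt_const 0 (Ici 0) (Ffun f 0)).sub this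
      rw [zero_sub] at h2
      exact h2
    refine h1.congr (fun y hy => ?_) (by rw [Fsplit hfint (le_refl (0:ℝ)) le_rfl]; simp)
    rw [Fsplit hfint le_rfl hy]; ring
  · exact (FhasDerivAt hfcont hfint hz).hasDerivWithinAt

include hfpos hfint in
theorem gpos {z : ℝ} (hz : 0 ≤ z) : 0 < gfun f z := by
  rw [gfun_eq]
  have := Fpos hfpos hfint hz
  positivity

include hfcont hfpos hfint in
theorem ghasDerivAt {z : ℝ} (hz : 0 < z) :
    HasDerivAt (gfun f) (-(f z) / gfun f z) z := by
  have hF : 0 < Ffun f z := Fpos hfpos hfint hz.le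
  have h2F : (2 : ℝ) * Ffun f z ≠ 0 := by positivity
  have h := (Real.hasDerivAt_sqrt h2F).comp z ((FhasDerivAt hfcont hfint hz).const_mul 2)
  rw [gfun_eq]
  convert h using 1
  have hs : Real.sqrt (2 * Ffun f z) ≠ 0 := Real.sqrt_ne_zero'.mpr (by positivity)
  show -f z / Real.sqrt (2 * Ffun f z) = _
  field_simp
  all_goals rfl

include hfcont hfpos hfint in
theorem ghasDerivWithinAt {z : ℝ} (hz : 0 ≤ z) :
    HasDerivWithinAt (gfun f) (-(f z) / gfun f z) (Ici 0) z := by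
  have hF : 0 < Ffun f z := Fpos hfpos hfint hz
  have h2F : (2 : ℝ) * Ffun f z ≠ 0 := by positivity
  have h := (Real.hasDerivAt_sqrt h2F).comp_hasDerivWithinAt z
    ((FhasDerivWithinAt hfcont hfint hz).const_mul 2)
  rw [gfun_eq]
  convert h using 1
  have hs : Real.sqrt (2 * Ffun f z) ≠ 0 := Real.sqrt_ne_zero'.mpr (by positivity)
  show -f z / Real.sqrt (2 * Ffun f z) = _
  field_simp
  all_goals rfl

include hfcont hfpos hfint in
theorem gcontOn : ContinuousOn (gfun f) (Ici 0) := fun z hz =>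
  (ghasDerivWithinAt hfcont hfpos hfint hz).continuousWithinAt

include hfpos hfint in
theorem gle {z : ℝ} (hz : 0 ≤ z) : gfun f z ≤ gfun f 0 := by
  rw [gfun_eq]
  apply Real.sqrt_le_sqrt
  have h := Fsplit hfint le_rfl hz
  have : 0 ≤ ∫ s in (0:ℝ)..z, f s := by
    apply intervalIntegral.integral_nonneg hz
    intro u hu
    exact (hfpos u hu.1).le
  linarith

include hfcont hfpos hfint in
theorem ginv_contOn : ContinuousOn (fun z => (gfun f z)⁻¹) (Ici 0) :=
  (gcontOn hfcont hfpos hfint).inv₀ fun z hz => (gpos hfpos hfint hz).ne'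

include hfcont hfpos hfint in
theorem hival {a b : ℝ} (ha : 0 ≤ a) (hb : 0 ≤ b) :
    IntervalIntegrable (fun z => (gfun f z)⁻¹) volume a b :=
  ((ginv_contOn hfcont hfpos hfint).mono
    fun x hx => (le_min ha hb).trans hx.1).intervalIntegrable

include hfcont hfpos hfint in
theorem hhasDerivAt {t : ℝ} (ht : 0 < t) : HasDerivAt (hfun f) (gfun f t)⁻¹ t :=
  intervalIntegral.integral_hasDerivAt_right (hival hfcont hfpos hfint le_rfl ht.le)
    (ContinuousOn.stronglyMeasurableAtFilter isOpen_Ioi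
      ((ginv_contOn hfcont hfpos hfint).mono (Ioi_subset_Ici le_rfl)) t ht)
    ((ginv_contOn hfcont hfpos hfint).continuousAt (Ici_mem_nhds ht))

include hfcont hfpos hfint in
theorem hhasDerivWithinAt {t : ℝ} (ht : 0 ≤ t) :
    HasDerivWithinAt (hfun f) (gfun f t)⁻¹ (Ici 0) t := by
  rcases eq_or_lt_of_le ht with rfl | ht
  · exact intervalIntegral.integral_hasDerivWithinAt_right
      (hival hfcont hfpos hfint le_rfl le_rfl) (s := Ici 0) (t := Ioi 0)
      ⟨Ici 0, Filter.mem_of_superset self_mem_nhdsWithin Ioi_subset_Ici_self,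
        (ginv_contOn hfcont hfpos hfint).aestronglyMeasurable measurableSet_Ici⟩
      (((ginv_contOn hfcont hfpos hfint) 0 (mem_Ici.mpr le_rfl)).mono Ioi_subset_Ici_self)
  · exact (hhasDerivAt hfcont hfpos hfint ht).hasDerivWithinAt

include hfcont hfpos hfint in
theorem hcontOn : ContinuousOn (hfun f) (Ici 0) := fun t ht =>
  (hhasDerivWithinAt hfcont hfpos hfint ht).continuousWithinAt

theorem hzero : hfun f 0 = 0 := intervalIntegral.integral_same

include hfcont hfpos hfint in
theorem hdiff {a b : ℝ} (ha : 0 ≤ a) (hb : 0 ≤ b) :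
    hfun f b - hfun f a = ∫ z in a..b, (gfun f z)⁻¹ := by
  rw [hfun, hfun, ← intervalIntegral.integral_add_adjacent_intervals
    (hival hfcont hfpos hfint le_rfl ha) (hival hfcont hfpos hfint ha hb)]
  ring

include hfcont hfpos hfint in
theorem hmono : StrictMonoOn (hfun f) (Ici 0) := by
  intro a ha b hb hab
  have h1 : 0 < ∫ z in a..b, (gfun f z)⁻¹ := by
    apply intervalIntegral.intervalIntegral_pos_of_pos_on
      (hival hfcont hfpos hfint ha hb)
      (fun x hx => inv_pos.mpr (gpos hfpos hfint (le_trans ha hx.1.le))) hab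
  have := hdiff hfcont hfpos hfint ha hb
  simp only [mem_Ici] at ha hb
  linarith

include hfcont hfpos hfint in
theorem hge {t : ℝ} (ht : 0 ≤ t) : t * (gfun f 0)⁻¹ ≤ hfun f t := by
  have h1 : ∫ z in (0:ℝ)..t, (gfun f 0)⁻¹ ≤ ∫ z in (0:ℝ)..t, (gfun f z)⁻¹ := by
    apply intervalIntegral.integral_mono_on ht intervalIntegrable_const
      (hival hfcont hfpos hfint le_rfl ht)
    intro x hx
    exact inv_anti₀ (gpos hfpos hfint hx.1) (gle hfpos hfint hx.1)
  simpa [hfun] using h1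

include hfcont hfpos hfint in
theorem himage : hfun f '' Ici 0 = Ici 0 := by
  apply Subset.antisymm
  · rintro _ ⟨t, ht, rfl⟩
    have h0 : (0:ℝ) ≤ t * (gfun f 0)⁻¹ :=
      mul_nonneg ht (inv_pos.mpr (gpos hfpos hfint le_rfl)).le
    exact mem_Ici.mpr (h0.trans (hge hfcont hfpos hfint ht))
  · intro y hy
    simp only [mem_Ici] at hy
    set T := y * gfun f 0 with hT
    have hT0 : 0 ≤ T := mul_nonneg hy (gpos hfpos hfint le_rfl).le
    have hTy : y ≤ hfun f T := by
      have h2 := hge hfcont hfpos hfint hT0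
      have hg0 : (0:ℝ) < gfun f 0 := gpos hfpos hfint le_rfl
      calc y = T * (gfun f 0)⁻¹ := by rw [hT, mul_inv_cancel_right₀ hg0.ne']
        _ ≤ hfun f T := h2
    have h3 := intermediate_value_Icc hT0
      ((hcontOn hfcont hfpos hfint).mono Icc_subset_Ici_self)
    have hmem : y ∈ Icc (hfun f 0) (hfun f T) := by
      constructor
      · rw [hzero]; exact hy
      · exact hTy
    exact image_mono Icc_subset_Ici_self (h3 hmem)

/-- The order isomorphism `[0,∞) ≃o [0,∞)` induced by `hfun f`. -/
noncomputable def efun (hfcont : ContinuousOn f (Ici 0))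
    (hfpos : ∀ s ∈ Ici (0 : ℝ), 0 < f s) (hfint : IntegrableOn f (Ioi 0)) :
    (Ici (0:ℝ)) ≃o (Ici (0:ℝ)) :=
  ((hmono hfcont hfpos hfint).orderIso _ _).trans
    (OrderIso.setCongr _ _ (himage hfcont hfpos hfint))

/-- The inverse function of `hfun f` on `[0,∞)`. -/
noncomputable def ufun (hfcont : ContinuousOn f (Ici 0))
    (hfpos : ∀ s ∈ Ici (0 : ℝ), 0 < f s) (hfint : IntegrableOn f (Ioi 0)) : ℝ → ℝ :=
  fun x => if hx : 0 ≤ x then ((efun hfcont hfpos hfint).symm ⟨x, hx⟩ : ℝ) else 0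

theorem efun_apply (t : Ici (0:ℝ)) : (efun hfcont hfpos hfint t : ℝ) = hfun f t := rfl

theorem ufun_nonneg {x : ℝ} (hx : 0 ≤ x) : 0 ≤ ufun hfcont hfpos hfint x := by
  rw [ufun, dif_pos hx]
  exact ((efun hfcont hfpos hfint).symm ⟨x, hx⟩).2

theorem h_ufun {x : ℝ} (hx : 0 ≤ x) : hfun f (ufun hfcont hfpos hfint x) = x := by
  rw [ufun, dif_pos hx]
  have h1 := (efun hfcont hfpos hfint).apply_symm_apply ⟨x, hx⟩
  calc hfun f ((efun hfcont hfpos hfint).symm ⟨x, hx⟩ : ℝ)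
      = ((efun hfcont hfpos hfint) ((efun hfcont hfpos hfint).symm ⟨x, hx⟩) : ℝ) :=
        (efun_apply hfcont hfpos hfint _).symm
    _ = x := by rw [h1]

theorem ufun_zero : ufun hfcont hfpos hfint 0 = 0 := by
  have h1 : hfun f (ufun hfcont hfpos hfint 0) = 0 := h_ufun hfcont hfpos hfint le_rfl
  by_contra hne
  have hpos : 0 < ufun hfcont hfpos hfint 0 :=
    lt_of_le_of_ne (ufun_nonneg hfcont hfpos hfint le_rfl) (Ne.symm hne)
  have h2 := hmono hfcont hfpos hfint (self_mem_Ici) (mem_Ici.mpr hpos.le) hpos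
  rw [hzero, h1] at h2
  exact lt_irrefl _ h2

theorem ufun_pos {x : ℝ} (hx : 0 < x) : 0 < ufun hfcont hfpos hfint x := by
  rcases eq_or_lt_of_le (ufun_nonneg hfcont hfpos hfint hx.le) with h | h
  · exfalso
    have h1 := h_ufun hfcont hfpos hfint hx.le
    rw [← h, hzero] at h1
    exact hx.ne h1
  · exact h

theorem ufun_contOn : ContinuousOn (ufun hfcont hfpos hfint) (Ici 0) := by
  rw [continuousOn_iff_continuous_restrict]
  have h1 : domRestrict (Ici 0) (ufun hfcont hfpos hfint) =
      fun x : Ici (0:ℝ) => ((efun hfcont hfpos hfint).symm x : ℝ) := by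
    funext x
    simp only [domRestrict_apply, ufun, Subtype.coe_eta]
    exact dif_pos x.2
  rw [h1]
  exact continuous_subtype_val.comp (efun hfcont hfpos hfint).symm.continuous

include hfcont hfpos hfint in
theorem hStrict {t : ℝ} (ht : 0 < t) : HasStrictDerivAt (hfun f) (gfun f t)⁻¹ t := by
  apply hasStrictDerivAt_of_hasDerivAt_of_continuousAt (f' := fun z => (gfun f z)⁻¹)
  · filter_upwards [Ioi_mem_nhds ht] with y hy
    exact hhasDerivAt hfcont hfpos hfint hy
  · exact (ginv_contOn hfcont hfpos hfint).continuousAt (Ici_mem_nhds ht)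

theorem uHasDerivAt {x : ℝ} (hx : 0 < x) :
    HasDerivAt (ufun hfcont hfpos hfint) (gfun f (ufun hfcont hfpos hfint x)) x := by
  set u := ufun hfcont hfpos hfint with hu
  have hux : 0 < u x := ufun_pos hfcont hfpos hfint hx
  have h1 : HasDerivAt u ((gfun f (u x))⁻¹)⁻¹ x := by
    apply HasStrictDerivAt.hasDerivAt
    apply HasStrictDerivAt.of_local_left_inverse
      ((ufun_contOn hfcont hfpos hfint).continuousAt (Ici_mem_nhds hx))
      (hStrict hfcont hfpos hfint hux)
      (inv_ne_zero (gpos hfpos hfint hux.le).ne')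
    filter_upwards [Ioi_mem_nhds hx] with y hy
    exact h_ufun hfcont hfpos hfint hy.le
  rwa [inv_inv] at h1

theorem uHasDerivWithinAt {x : ℝ} (hx : 0 ≤ x) :
    HasDerivWithinAt (ufun hfcont hfpos hfint)
      (gfun f (ufun hfcont hfpos hfint x)) (Ici 0) x := by
  rcases eq_or_lt_of_le hx with rfl | hx
  · set u := ufun hfcont hfpos hfint with hu
    have huz : u 0 = 0 := ufun_zero hfcont hfpos hfint
    rw [hasDerivWithinAt_iff_tendsto_slope, Ici_sdiff_left]
    have hslope : Filter.Tendsto (fun t => hfun f t / t) (nhdsWithin 0 (Ioi 0))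
        (nhds (gfun f 0)⁻¹) := by
      have h0 := (hhasDerivWithinAt hfcont hfpos hfint le_rfl).mono
        (Ioi_subset_Ici le_rfl)
      rw [hasDerivWithinAt_iff_tendsto_slope] at h0
      have h2 : Ioi (0:ℝ) \ {0} = Ioi 0 := diff_singleton_eq_self (by simp)
      rw [h2] at h0
      refine h0.congr' ?_
      filter_upwards [self_mem_nhdsWithin] with t ht
      rw [slope_def_field, hzero]
      simp [div_eq_inv_mul]
    have hinv : Filter.Tendsto (fun t => t / hfun f t) (nhdsWithin 0 (Ioi 0))
        (nhds (gfun f 0)) := by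
      have h3 := hslope.inv₀ (inv_ne_zero (gpos hfpos hfint le_rfl).ne')
      rw [inv_inv] at h3
      refine h3.congr' ?_
      filter_upwards [self_mem_nhdsWithin] with t ht
      rw [inv_div]
    have hucomp : Filter.Tendsto u (nhdsWithin 0 (Ioi 0)) (nhdsWithin 0 (Ioi 0)) := by
      rw [tendsto_nhdsWithin_iff]
      constructor
      · have h4 := ((ufun_contOn hfcont hfpos hfint) 0 (mem_Ici.mpr le_rfl)).mono
          (Ioi_subset_Ici le_rfl)
        rw [ContinuousWithinAt, ufun_zero hfcont hfpos hfint] at h4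
        exact h4
      · filter_upwards [self_mem_nhdsWithin] with y hy
        exact ufun_pos hfcont hfpos hfint hy
    have hfinal := hinv.comp hucomp
    rw [huz]
    refine hfinal.congr' ?_
    filter_upwards [self_mem_nhdsWithin] with y hy
    rw [slope_def_field, huz]
    simp only [Function.comp_apply, h_ufun hfcont hfpos hfint (le_of_lt hy)]
    rw [hu, h_ufun hfcont hfpos hfint (le_of_lt hy)]
    rw [sub_zero, sub_zero]
  · exact (uHasDerivAt hfcont hfpos hfint hx).hasDerivWithinAt

theorem guHasDerivWithinAt {x : ℝ} (hx : 0 ≤ x) :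
    HasDerivWithinAt (fun y => gfun f (ufun hfcont hfpos hfint y))
      (-(f (ufun hfcont hfpos hfint x))) (Ici 0) x := by
  have hux : 0 ≤ ufun hfcont hfpos hfint x := ufun_nonneg hfcont hfpos hfint hx
  have h1 := (ghasDerivWithinAt hfcont hfpos hfint hux).comp x
    (uHasDerivWithinAt hfcont hfpos hfint hx)
    (fun y hy => ufun_nonneg hfcont hfpos hfint hy)
  convert h1 using 1
  case e'_9 => exact (div_mul_cancel₀ _ (gpos hfpos hfint hux).ne').symm
  all_goals rfl

theorem uContDiff : ContDiffOn ℝ 2 (ufun hfcont hfpos hfint) (Ici 0) := by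
  rw [show (2 : WithTop ℕ∞) = 1 + 1 from rfl,
    contDiffOn_succ_iff_derivWithin (uniqueDiffOn_Ici 0)]
  refine ⟨fun x hx => (uHasDerivWithinAt hfcont hfpos hfint hx).differentiableWithinAt,
    by simp, ?_⟩
  have hEq : EqOn (derivWithin (ufun hfcont hfpos hfint) (Ici 0))
      (fun x => gfun f (ufun hfcont hfpos hfint x)) (Ici 0) := fun x hx =>
    (uHasDerivWithinAt hfcont hfpos hfint hx).derivWithin (uniqueDiffOn_Ici 0 x hx)
  refine ContDiffOn.congr ?_ hEq
  rw [show (1 : WithTop ℕ∞) = 0 + 1 from rfl,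
    contDiffOn_succ_iff_derivWithin (uniqueDiffOn_Ici 0)]
  refine ⟨fun x hx => (guHasDerivWithinAt hfcont hfpos hfint hx).differentiableWithinAt,
    by simp, ?_⟩
  rw [contDiffOn_zero]
  have hEq2 : EqOn (derivWithin (fun x => gfun f (ufun hfcont hfpos hfint x)) (Ici 0))
      (fun x => -(f (ufun hfcont hfpos hfint x))) (Ici 0) := fun x hx =>
    (guHasDerivWithinAt hfcont hfpos hfint hx).derivWithin (uniqueDiffOn_Ici 0 x hx)
  refine ContinuousOn.congr ?_ hEq2
  exact (hfcont.comp (ufun_contOn hfcont hfpos hfint)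
    fun y hy => ufun_nonneg hfcont hfpos hfint hy).neg

theorem uODE {x : ℝ} (hx : 0 < x) :
    -(deriv (deriv (ufun hfcont hfpos hfint)) x) = f (ufun hfcont hfpos hfint x) := by
  have hux : 0 < ufun hfcont hfpos hfint x := ufun_pos hfcont hfpos hfint hx
  have h1 : deriv (ufun hfcont hfpos hfint) =ᶠ[nhds x]
      fun y => gfun f (ufun hfcont hfpos hfint y) := by
    filter_upwards [Ioi_mem_nhds hx] with y hy
    exact (uHasDerivAt hfcont hfpos hfint hy).deriv
  have h2 : HasDerivAt (fun y => gfun f (ufun hfcont hfpos hfint y))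
      (-(f (ufun hfcont hfpos hfint x))) x := by
    have h3 := (ghasDerivAt hfcont hfpos hfint hux).comp x
      (uHasDerivAt hfcont hfpos hfint hx)
    convert h3 using 1
    case e'_9 => exact (div_mul_cancel₀ _ (gpos hfpos hfint hux.le).ne').symm
    all_goals rfl
  rw [Filter.EventuallyEq.deriv_eq h1, h2.deriv, neg_neg]

end Aux

/-- If `f : [0,∞) → (0,∞)` is continuous with `∫_0^∞ f < ∞`, then `-u'' = f(u)` on
`(0,∞)`, `u(0) = 0`, has a positive solution `u ∈ C²([0,∞))`; moreover one may take
`u = h⁻¹` where `h(t) = ∫_0^t dz/g(z)`, `g(z) = (2∫_z^∞ f)^{1/2}`, `h` being an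
increasing bijection of `[0,∞)` onto itself. -/
theorem exists_solution_ODE_of_integrable (f : ℝ → ℝ)
    (hfcont : ContinuousOn f (Ici 0))
    (hfpos : ∀ s ∈ Ici (0 : ℝ), 0 < f s)
    (hfint : IntegrableOn f (Ioi 0)) :
    StrictMonoOn (hfun f) (Ici 0) ∧
    (hfun f) '' (Ici 0) = Ici 0 ∧
    ∃ u : ℝ → ℝ,
      ContDiffOn ℝ 2 u (Ici 0) ∧
      u 0 = 0 ∧
      (∀ x : ℝ, 0 < x → 0 < u x) ∧
      (∀ x : ℝ, 0 < x → -(deriv (deriv u) x) = f (u x)) ∧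
      (∀ x : ℝ, 0 ≤ x → hfun f (u x) = x) := by
  refine ⟨hmono hfcont hfpos hfint, himage hfcont hfpos hfint,
    ufun hfcont hfpos hfint, uContDiff hfcont hfpos hfint,
    ufun_zero hfcont hfpos hfint,
    fun x hx => ufun_pos hfcont hfpos hfint hx,
    fun x hx => uODE hfcont hfpos hfint hx,
    fun x hx => h_ufun hfcont hfpos hfint hx⟩
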